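/- Let R be a commutative ring and M a faithful multiplication R-module with at least two nontrivial ideals of R. Then the M-intersection graph G_M(R) is a complete graph if and only if M is a uniform module (i.e., any two nonzero submodules of M have nonzero intersection). -/

import Mathlib

/-- The `M`-intersection graph of ideals of `R`: vertices are the nontrivial ideals of `R`,
and two distinct vertices `I`, `J` are adjacent iff `IM ∩ JM ≠ 0`. -/
def interGraph (R M : Type*) [CommRing R] [AddCommGroup M] [Module R M] :
    SimpleGraph {I : Ideal R // I ≠ ⊥ ∧ I ≠ ⊤} where
  Adj I J := I ≠ J ∧ (I.1 • ⊤ ⊓ J.1 • ⊤ : Submodule R M) ≠ ⊥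
  symm := ⟨fun I J h => ⟨h.1.symm, by rw [inf_comm]; exact h.2⟩⟩
  loopless := ⟨fun I h => h.1 rfl⟩

private lemma smul_top_eq_bot_iff {R M : Type*} [CommRing R] [AddCommGroup M] [Module R M]
    (hfaith : (⊤ : Submodule R M).annihilator = ⊥) {I : Ideal R} :
    I • (⊤ : Submodule R M) = ⊥ ↔ I = ⊥ := by
  constructor
  · intro h
    rw [eq_bot_iff]
    intro r hr
    have : r ∈ (⊤ : Submodule R M).annihilator := by
      rw [Submodule.mem_annihilator]
      intro m _
      have : r • m ∈ I • (⊤ : Submodule R M) :=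
        Submodule.smul_mem_smul hr trivial
      rwa [h, Submodule.mem_bot] at this
    rwa [hfaith] at this
  · rintro rfl; simp

/-- For a faithful multiplication module `M` over a commutative ring `R`
having at least two nontrivial ideals, the `M`-intersection graph `G_M(R)` is complete
iff `M` is a uniform module. -/
theorem complete_iff_uniform (R M : Type*) [CommRing R] [AddCommGroup M] [Module R M]
    [Nontrivial M]
    (hfaith : (⊤ : Submodule R M).annihilator = ⊥)
    (hmul : ∀ N : Submodule R M, ∃ I : Ideal R, N = I • ⊤)
    (htwo : ∃ I J : {I : Ideal R // I ≠ ⊥ ∧ I ≠ ⊤}, I ≠ J) :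
    interGraph R M = ⊤ ↔
      ∀ N K : Submodule R M, N ≠ ⊥ → K ≠ ⊥ → N ⊓ K ≠ ⊥ := by
  constructor
  · intro hcomp N K hN hK
    obtain ⟨I, rfl⟩ := hmul N
    obtain ⟨J, rfl⟩ := hmul K
    have hI : I ≠ ⊥ := fun h => hN ((smul_top_eq_bot_iff hfaith).2 h)
    have hJ : J ≠ ⊥ := fun h => hK ((smul_top_eq_bot_iff hfaith).2 h)
    by_cases hIt : I = ⊤
    · subst hIt; simpa using hK
    by_cases hJt : J = ⊤
    · subst hJt; simpa using hN
    by_cases hIJ : I = J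
    · subst hIJ; simpa using hN
    have hadj : (interGraph R M).Adj ⟨I, hI, hIt⟩ ⟨J, hJ, hJt⟩ := by
      rw [hcomp]
      exact fun h => hIJ (congrArg Subtype.val h)
    exact hadj.2
  · intro huni
    ext u v
    simp only [SimpleGraph.top_adj]
    constructor
    · exact fun h => h.1
    · intro h
      refine ⟨h, huni _ _ ?_ ?_⟩
      · exact fun hb => u.2.1 ((smul_top_eq_bot_iff hfaith).1 hb)
      · exact fun hb => v.2.1 ((smul_top_eq_bot_iff hfaith).1 hb)
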